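/- There exists an absolute constant C > 0 such that for every integer d ≥ 1 and all α, ϑ ∈ (1,2): S_d·| c_{d,α} − c_{d,ϑ} | ≤ C·d·|α − ϑ|. -/

import Mathlib

open Real MeasureTheory

/-- The constant `c_{d,α} = α·2^(α−2)·Γ((d+α)/2) / (π^(d/2)·Γ((2−α)/2))`. -/
noncomputable def stableConst (d : ℕ) (α : ℝ) : ℝ :=
  α * (2 : ℝ) ^ (α - 2) * Real.Gamma ((d + α) / 2) /
    (Real.pi ^ ((d : ℝ) / 2) * Real.Gamma ((2 - α) / 2))

/-- The surface area `S_d = 2·π^(d/2)/Γ(d/2)` of the unit sphere in `ℝ^d`. -/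
noncomputable def sphereArea (d : ℕ) : ℝ :=
  2 * Real.pi ^ ((d : ℝ) / 2) / Real.Gamma ((d : ℝ) / 2)

open Set

section aux

lemma dGamma {x : ℝ} (hx : 0 < x) : DifferentiableAt ℝ Real.Gamma x :=
  Real.differentiableAt_Gamma (fun m => by
    have h0 : (0:ℝ) ≤ (m:ℝ) := Nat.cast_nonneg m
    intro h; rw [h] at hx; linarith)

lemma hasDerivAt_logGamma {x : ℝ} (hx : 0 < x) :
    HasDerivAt (Real.log ∘ Real.Gamma) (deriv Real.Gamma x / Real.Gamma x) x :=
  (dGamma hx).hasDerivAt.log (Real.Gamma_pos_of_pos hx).ne'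

lemma diff_logGamma {x : ℝ} (hx : 0 < x) :
    DifferentiableAt ℝ (Real.log ∘ Real.Gamma) x :=
  (hasDerivAt_logGamma hx).differentiableAt

lemma deriv_logGamma {x : ℝ} (hx : 0 < x) :
    deriv (Real.log ∘ Real.Gamma) x = deriv Real.Gamma x / Real.Gamma x :=
  (hasDerivAt_logGamma hx).deriv

-- convexity inequality specialized, with multiplication
lemma lg_convex {x y a b : ℝ} (hx : 0 < x) (hy : 0 < y) (ha : 0 ≤ a) (hb : 0 ≤ b)
    (hab : a + b = 1) :
    Real.log (Real.Gamma (a * x + b * y)) ≤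
      a * Real.log (Real.Gamma x) + b * Real.log (Real.Gamma y) := by
  have := Real.convexOn_log_Gamma.2 (mem_Ioi.mpr hx) (mem_Ioi.mpr hy) ha hb hab
  simpa [smul_eq_mul, Function.comp] using this

-- Γ ≥ 1 on (0,1]
lemma one_le_Gamma_of_le_one {x : ℝ} (hx : 0 < x) (hx1 : x ≤ 1) : 1 ≤ Real.Gamma x := by
  rcases eq_or_lt_of_le hx1 with h | h
  · rw [h, Real.Gamma_one]
  · have h2x : (0:ℝ) < 2 - x := by linarith
    have hc := lg_convex hx (by norm_num : (0:ℝ) < 2)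
      (a := 1/(2-x)) (b := 1 - 1/(2-x)) (by positivity)
      (by rw [sub_nonneg, div_le_one h2x]; linarith) (by ring)
    have hcomb : (1/(2-x)) * x + (1 - 1/(2-x)) * 2 = 1 := by field_simp; ring
    rw [hcomb, Real.Gamma_one, Real.Gamma_two, Real.log_one] at hc
    have ha : 0 < 1/(2-x) := by positivity
    have hlog : 0 ≤ Real.log (Real.Gamma x) := by nlinarith [hc]
    have := Real.exp_le_exp.mpr hlog
    rwa [Real.exp_zero, Real.exp_log (Real.Gamma_pos_of_pos hx)] at this

-- Γ ≥ 1 on [2, ∞)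
lemma one_le_Gamma_of_two_le {x : ℝ} (hx : 2 ≤ x) : 1 ≤ Real.Gamma x := by
  rcases eq_or_lt_of_le hx with h | h
  · rw [← h, Real.Gamma_two]
  · have h1x : (0:ℝ) < x - 1 := by linarith
    have hc := lg_convex (by norm_num : (0:ℝ) < 1) (by linarith : (0:ℝ) < x)
      (a := (x-2)/(x-1)) (b := 1/(x-1)) (div_nonneg (by linarith) (by linarith))
      (by positivity) (by field_simp; ring)
    have hcomb : ((x-2)/(x-1)) * 1 + (1/(x-1)) * x = 2 := by field_simp; ring
    rw [hcomb, Real.Gamma_one, Real.Gamma_two, Real.log_one] at hc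
    have hb : 0 < 1/(x-1) := by positivity
    have hlog : 0 ≤ Real.log (Real.Gamma x) := by nlinarith [hc]
    have := Real.exp_le_exp.mpr hlog
    rwa [Real.exp_zero, Real.exp_log (Real.Gamma_pos_of_pos (by linarith))] at this

lemma Gamma_three : Real.Gamma 3 = 2 := by
  have := Real.Gamma_add_one (by norm_num : (2:ℝ) ≠ 0)
  rw [show (3:ℝ) = 2 + 1 by norm_num, this, Real.Gamma_two]; ring

-- log Γ ≥ -log 2 on [1, 2]
lemma neg_log_two_le_logGamma_of_mem {x : ℝ} (h1 : 1 ≤ x) (h2 : x ≤ 2) :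
    -Real.log 2 ≤ Real.log (Real.Gamma x) := by
  have hl2 : 0 ≤ Real.log 2 := Real.log_nonneg one_le_two
  rcases eq_or_lt_of_le h2 with h | h
  · rw [h, Real.Gamma_two, Real.log_one]; linarith
  · have h3x : (0:ℝ) < 3 - x := by linarith
    have hc := lg_convex (by linarith : (0:ℝ) < x) (by norm_num : (0:ℝ) < 3)
      (a := 1/(3-x)) (b := 1 - 1/(3-x)) (by positivity)
      (by rw [sub_nonneg, div_le_one h3x]; linarith) (by ring)
    have hcomb : (1/(3-x)) * x + (1 - 1/(3-x)) * 3 = 2 := by field_simp; ring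
    rw [hcomb, Real.Gamma_two, Real.log_one, Gamma_three] at hc
    have ha : 1/2 ≤ 1/(3-x) := by
      rw [div_le_div_iff₀ (by norm_num) h3x]; linarith
    have ha' : 0 < 1/(3-x) := by positivity
    have hb : 1 - 1/(3-x) ≤ 1/2 := by linarith
    -- 0 ≤ a * logΓx + b * log 2  ⇒ logΓx ≥ -(b/a) log2 ≥ -log2
    nlinarith [hc]

lemma half_le_Gamma {x : ℝ} (hx : 1/2 ≤ x) : 1/2 ≤ Real.Gamma x := by
  rcases le_or_gt x 1 with h | h
  · linarith [one_le_Gamma_of_le_one (by linarith) h]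
  rcases le_or_gt x 2 with h2 | h2
  · have hlog := neg_log_two_le_logGamma_of_mem h.le h2
    have hpos := Real.Gamma_pos_of_pos (by linarith : (0:ℝ) < x)
    have h12 : Real.log (1/2) ≤ Real.log (Real.Gamma x) := by
      rw [Real.log_div one_ne_zero two_ne_zero, Real.log_one]; linarith
    have := (Real.log_le_log_iff (by norm_num) hpos).mp h12
    linarith
  · linarith [one_le_Gamma_of_two_le h2.le]

lemma logGamma_lower {x : ℝ} (hx : 1/2 ≤ x) : -Real.log 2 ≤ Real.log (Real.Gamma x) := by
  have h := Real.log_le_log (by norm_num : (0:ℝ) < 1/2) (half_le_Gamma hx)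
  rwa [Real.log_div one_ne_zero two_ne_zero, Real.log_one, zero_sub] at h

end aux

section bux

lemma logGamma_upper_half_two {x : ℝ} (h1 : 1/2 ≤ x) (h2 : x ≤ 2) :
    Real.log (Real.Gamma x) ≤ Real.log 2 := by
  have hl2 : 0 ≤ Real.log 2 := Real.log_nonneg one_le_two
  rcases eq_or_lt_of_le h1 with h | h
  · rw [← h, Real.Gamma_one_half_eq, Real.log_sqrt Real.pi_pos.le]
    have : Real.log π ≤ Real.log 4 := Real.log_le_log Real.pi_pos
      (by linarith [Real.pi_le_four])
    rw [show (4:ℝ) = 2^2 by norm_num, Real.log_pow] at this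
    push_cast at this
    linarith
  · have hd : (0:ℝ) < 3/2 := by norm_num
    have hc := lg_convex (by norm_num : (0:ℝ) < 1/2) (by norm_num : (0:ℝ) < 2)
      (a := (2-x)/(3/2)) (b := (x-1/2)/(3/2))
      (div_nonneg (by linarith) (by norm_num)) (div_nonneg (by linarith) (by norm_num))
      (by field_simp; ring)
    have hcomb : ((2-x)/(3/2)) * (1/2) + ((x-1/2)/(3/2)) * 2 = x := by field_simp; ring
    rw [hcomb, Real.Gamma_two, Real.log_one, Real.Gamma_one_half_eq,
      Real.log_sqrt Real.pi_pos.le] at hc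
    have hpi : Real.log π ≤ 2 * Real.log 2 := by
      have : Real.log π ≤ Real.log 4 := Real.log_le_log Real.pi_pos
        (by linarith [Real.pi_le_four])
      rw [show (4:ℝ) = 2^2 by norm_num, Real.log_pow] at this
      push_cast at this
      linarith
    have ha1 : (2-x)/(3/2) ≤ 1 := by rw [div_le_one hd]; linarith
    have ha0 : 0 ≤ (2-x)/(3/2) := div_nonneg (by linarith) (by norm_num)
    nlinarith [hc]

lemma Gamma_le_two_of_mem {x : ℝ} (h1 : 1/2 ≤ x) (h2 : x ≤ 2) : Real.Gamma x ≤ 2 := by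
  have := logGamma_upper_half_two h1 h2
  have hpos := Real.Gamma_pos_of_pos (by linarith : (0:ℝ) < x)
  exact (Real.log_le_log_iff hpos (by norm_num)).mp this

lemma Gamma_quarter_le : Real.Gamma (1/4 : ℝ) ≤ 8 := by
  have h := Real.Gamma_add_one (by norm_num : (1/4:ℝ) ≠ 0)
  have h54 : Real.Gamma ((1/4:ℝ)+1) ≤ 2 := Gamma_le_two_of_mem (by norm_num) (by norm_num)
  rw [h] at h54
  linarith [h54]

lemma logGamma_quarter_le : Real.log (Real.Gamma (1/4 : ℝ)) ≤ 3 * Real.log 2 := by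
  have := Real.log_le_log (Real.Gamma_pos_of_pos (by norm_num : (0:ℝ) < 1/4)) Gamma_quarter_le
  rw [show (8:ℝ) = 2^3 by norm_num, Real.log_pow] at this
  push_cast at this
  linarith

-- psi upper bound : deriv Γ x / Γ x ≤ log x  for x > 0
lemma psi_le_log {x : ℝ} (hx : 0 < x) : deriv Real.Gamma x / Real.Gamma x ≤ Real.log x := by
  have hslope := Real.convexOn_log_Gamma.deriv_le_slope (mem_Ioi.mpr hx)
    (mem_Ioi.mpr (by linarith : (0:ℝ) < x + 1)) (by linarith) (diff_logGamma hx)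
  rw [deriv_logGamma hx] at hslope
  have hsl : slope (Real.log ∘ Real.Gamma) x (x+1) = Real.log x := by
    rw [slope_def_field]
    simp only [Function.comp_apply]
    rw [Real.Gamma_add_one hx.ne', Real.log_mul hx.ne' (Real.Gamma_pos_of_pos hx).ne']
    field_simp
    ring
  rwa [hsl] at hslope

-- psi lower bound : -12 ≤ deriv Γ x / Γ x for x ≥ 1/2
lemma psi_lower {x : ℝ} (hx : 1/2 ≤ x) : -12 ≤ deriv Real.Gamma x / Real.Gamma x := by
  have hx0 : (0:ℝ) < x := by linarith
  have hq : (0:ℝ) < 1/4 := by norm_num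
  have hslope := Real.convexOn_log_Gamma.slope_le_deriv (mem_Ioi.mpr hq)
    (mem_Ioi.mpr hx0) (by linarith) (diff_logGamma hx0)
  rw [deriv_logGamma hx0] at hslope
  refine le_trans ?_ hslope
  rw [slope_def_field]
  simp only [Function.comp_apply]
  have hnum : -(4 * Real.log 2) ≤
      Real.log (Real.Gamma x) - Real.log (Real.Gamma (1/4)) := by
    have := logGamma_lower hx
    have := logGamma_quarter_le
    linarith
  have hden : (1/4:ℝ) ≤ x - 1/4 := by linarith
  have hden0 : (0:ℝ) < x - 1/4 := by linarith
  have hl2 : Real.log 2 ≤ 0.6931471808 := Real.log_two_lt_d9.le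
  have hl2' : 0 ≤ Real.log 2 := Real.log_nonneg one_le_two
  rw [le_div_iff₀ hden0]
  nlinarith [hnum, hden, hl2]
end bux

section cux

lemma abs_deriv_Gamma_le_one {x : ℝ} (h1 : 1 ≤ x) :
    |deriv Real.Gamma x| ≤ Real.Gamma x * (Real.log x + 12) := by
  have hx0 : (0:ℝ) < x := by linarith
  have hG := Real.Gamma_pos_of_pos hx0
  have hu := psi_le_log hx0
  have hl := psi_lower (by linarith : 1/2 ≤ x)
  have hlx : 0 ≤ Real.log x := Real.log_nonneg h1
  rw [abs_le]
  constructor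
  · have := (div_le_iff₀ hG).mp hu
    have h2 : -12 * Real.Gamma x ≤ deriv Real.Gamma x := by
      have := (le_div_iff₀ hG).mp hl
      linarith
    nlinarith
  · have := (div_le_iff₀ hG).mp hu
    nlinarith

lemma abs_deriv_Gamma_le_half {x : ℝ} (h1 : 1/2 ≤ x) (h2 : x ≤ 1) :
    |deriv Real.Gamma x| ≤ 24 := by
  have hx0 : (0:ℝ) < x := by linarith
  have hG := Real.Gamma_pos_of_pos hx0
  have hG2 : Real.Gamma x ≤ 2 := Gamma_le_two_of_mem h1 (by linarith)
  have hu := psi_le_log hx0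
  have hl := psi_lower h1
  have hlx : Real.log x ≤ 0 := Real.log_nonpos hx0.le h2
  rw [abs_le]
  constructor
  · have := (le_div_iff₀ hG).mp hl
    nlinarith
  · have := (div_le_iff₀ hG).mp hu
    nlinarith

lemma Gamma_interp {c s : ℝ} (hc : 0 < c) (hs0 : 0 ≤ s) (hs1 : s ≤ 1) :
    Real.Gamma (c + s) ≤ Real.Gamma c * c ^ s := by
  have hc1 : (0:ℝ) < c + 1 := by linarith
  have hconv := lg_convex hc hc1 (by linarith : (0:ℝ) ≤ 1 - s) hs0 (by ring)
  have hcomb : (1 - s) * c + s * (c + 1) = c + s := by ring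
  rw [hcomb] at hconv
  have hGc := Real.Gamma_pos_of_pos hc
  have hGcs := Real.Gamma_pos_of_pos (by linarith : (0:ℝ) < c + s)
  have hG1 : Real.log (Real.Gamma (c+1)) = Real.log (Real.Gamma c) + Real.log c := by
    rw [Real.Gamma_add_one hc.ne', Real.log_mul hc.ne' hGc.ne']; ring
  rw [hG1] at hconv
  have key : Real.log (Real.Gamma (c+s)) ≤ Real.log (Real.Gamma c) + s * Real.log c := by
    nlinarith [hconv]
  have h := Real.exp_le_exp.mpr key
  rw [Real.exp_log hGcs, Real.exp_add, Real.exp_log hGc] at h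
  calc Real.Gamma (c+s) ≤ Real.Gamma c * Real.exp (s * Real.log c) := h
  _ = Real.Gamma c * c ^ s := by
      rw [Real.rpow_def_of_pos hc, mul_comm (Real.log c) s]

lemma rpow_le_cast {d : ℕ} (hd : 1 ≤ d) {e : ℝ} (he0 : 0 ≤ e) (he1 : e ≤ 1) :
    ((d:ℝ)/2) ^ e ≤ (d:ℝ) := by
  have hd1 : (1:ℝ) ≤ (d:ℝ) := by exact_mod_cast hd
  rcases le_or_gt ((d:ℝ)/2) 1 with h | h
  · calc ((d:ℝ)/2) ^ e ≤ 1 := Real.rpow_le_one (by positivity) h he0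
    _ ≤ (d:ℝ) := hd1
  · calc ((d:ℝ)/2) ^ e ≤ ((d:ℝ)/2) ^ (1:ℝ) :=
        Real.rpow_le_rpow_of_exponent_le h.le he1
    _ = (d:ℝ)/2 := Real.rpow_one _
    _ ≤ (d:ℝ) := by linarith

lemma sin_le_pi_mul {α : ℝ} (h1 : 1 < α) (h2 : α < 2) :
    Real.sin (π * α / 2) ≤ π * (2 - α) / 2 := by
  have : Real.sin (π * α / 2) = Real.sin (π - π * α / 2) := (Real.sin_pi_sub _).symm
  rw [this, show π - π * α / 2 = π * (2 - α) / 2 by ring]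
  exact Real.sin_le (by nlinarith [Real.pi_pos])

lemma sin_pos_mid {α : ℝ} (h1 : 1 < α) (h2 : α < 2) : 0 < Real.sin (π * α / 2) := by
  apply Real.sin_pos_of_pos_of_lt_pi <;> nlinarith [Real.pi_pos]

end cux

section star

lemma star_bound {d : ℕ} (hd : 1 ≤ d) {α : ℝ} (h1 : 1 < α) (h2 : α < 2) :
    Real.sin (π * α / 2) *
      ((((d:ℝ)/2)) ^ (α/2) * (Real.log (((d:ℝ) + α)/2) + 12)) ≤ 63 * d := by
  have hd1 : (1:ℝ) ≤ (d:ℝ) := by exact_mod_cast hd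
  set c : ℝ := (d:ℝ)/2 with hc
  set x : ℝ := ((d:ℝ) + α)/2 with hxdef
  have hc0 : (0:ℝ) < c := by positivity
  have hx1 : (1:ℝ) ≤ x := by rw [hxdef]; linarith
  have hx0 : (0:ℝ) < x := by linarith
  have hlx : 0 ≤ Real.log x := Real.log_nonneg hx1
  have hl2 : Real.log 2 ≤ 0.6931471808 := Real.log_two_lt_d9.le
  have hl2' : 0 ≤ Real.log 2 := Real.log_nonneg one_le_two
  have hsin0 : 0 < Real.sin (π * α / 2) := sin_pos_mid h1 h2
  have hsin1 : Real.sin (π * α / 2) ≤ 1 := Real.sin_le_one _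
  rcases le_or_gt (d:ℕ) 2 with hd2 | hd3
  · -- small d
    have hd2' : (d:ℝ) ≤ 2 := by exact_mod_cast hd2
    have hc1 : c ≤ 1 := by rw [hc]; linarith
    have hB1 : c ^ (α/2) ≤ 1 := Real.rpow_le_one hc0.le hc1 (by linarith)
    have hB0 : 0 < c ^ (α/2) := Real.rpow_pos_of_pos hc0 _
    have hx2 : x ≤ 2 := by rw [hxdef]; linarith
    have hlog2 : Real.log x ≤ Real.log 2 := Real.log_le_log hx0 hx2
    have hC : Real.log x + 12 ≤ 13 := by linarith
    have hC0 : 0 < Real.log x + 12 := by linarith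
    calc Real.sin (π * α / 2) * (c ^ (α/2) * (Real.log x + 12))
        ≤ 1 * (1 * 13) := by
          apply mul_le_mul hsin1 _ (by positivity) (by norm_num)
          exact mul_le_mul hB1 hC hC0.le (by norm_num)
      _ = 13 := by norm_num
      _ ≤ 63 * d := by nlinarith
  · -- large d
    have hd3' : (3:ℝ) ≤ (d:ℝ) := by exact_mod_cast hd3
    have hc32 : (3/2:ℝ) ≤ c := by rw [hc]; linarith
    set L : ℝ := Real.log c with hL
    have hL13 : (1/3:ℝ) ≤ L := by
      have h23 : Real.log ((2:ℝ)/3) ≤ 2/3 - 1 :=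
        Real.log_le_sub_one_of_pos (by norm_num)
      have hinv : Real.log ((3:ℝ)/2) = -Real.log ((2:ℝ)/3) := by
        rw [← Real.log_inv]; norm_num
      have h32 : (1/3:ℝ) ≤ Real.log ((3:ℝ)/2) := by rw [hinv]; linarith
      have := Real.log_le_log (by norm_num : (0:ℝ) < 3/2) hc32
      rw [hL]; linarith
    have hL0 : (0:ℝ) < L := by linarith
    set t : ℝ := (2 - α)/2 with ht
    have ht0 : 0 < t := by rw [ht]; linarith
    set E : ℝ := Real.exp (-(t * L)) with hE
    have hE0 : 0 < E := Real.exp_pos _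
    have hB : c ^ (α/2) = c * E := by
      rw [Real.rpow_def_of_pos hc0, hE]
      rw [show c * Real.exp (-(t*L)) = Real.exp L * Real.exp (-(t*L)) by
        rw [hL, Real.exp_log hc0]]
      rw [← Real.exp_add]
      congr 1
      rw [hL, ht]; ring
    have huL : (t * E) * L ≤ 1 := by
      have h1' : t * L ≤ Real.exp (t * L) := by
        have := Real.add_one_le_exp (t * L); linarith
      have : (t * E) * L = (t * L) * (Real.exp (t*L))⁻¹ := by
        rw [hE, Real.exp_neg]; ring
      rw [this]
      rw [← div_eq_mul_inv, div_le_one (Real.exp_pos _)]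
      exact h1'
    have hu0 : 0 ≤ t * E := by positivity
    have hu3 : t * E ≤ 3 := by nlinarith
    have hsin : Real.sin (π * α / 2) ≤ π * t := by
      have := sin_le_pi_mul h1 h2
      rw [ht]; linarith
    have hC13 : Real.log x + 12 ≤ L + 13 := by
      have hx2c : x ≤ 2 * c := by rw [hxdef, hc]; linarith
      have : Real.log x ≤ Real.log (2 * c) := Real.log_le_log hx0 hx2c
      rw [Real.log_mul two_ne_zero hc0.ne', ← hL] at this
      linarith
    have hC0 : 0 ≤ Real.log x + 12 := by linarith
    have hpi : π ≤ 3.15 := by linarith [Real.pi_lt_d2]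
    calc Real.sin (π * α / 2) * (c ^ (α/2) * (Real.log x + 12))
        = Real.sin (π * α / 2) * ((c * E) * (Real.log x + 12)) := by rw [hB]
      _ ≤ (π * t) * ((c * E) * (Real.log x + 12)) := by
          apply mul_le_mul_of_nonneg_right hsin (by positivity)
      _ ≤ (π * t) * ((c * E) * (L + 13)) := by
          apply mul_le_mul_of_nonneg_left _ (by positivity)
          exact mul_le_mul_of_nonneg_left hC13 (by positivity)
      _ = (π * c) * ((t * E) * L) + 13 * (π * c) * (t * E) := by ring
      _ ≤ (π * c) * 1 + 13 * (π * c) * 3 := by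
          have hpc : 0 ≤ π * c := by positivity
          have := mul_le_mul_of_nonneg_left huL hpc
          have := mul_le_mul_of_nonneg_left hu3 (by positivity : (0:ℝ) ≤ 13 * (π * c))
          linarith
      _ = 40 * (π * c) := by ring
      _ ≤ 63 * d := by rw [hc]; nlinarith [Real.pi_pos]

end star

section gd

noncomputable def Gd (d : ℕ) (α : ℝ) : ℝ :=
  2/π * (α * (2:ℝ)^(α-2) * Real.Gamma (α/2)) * Real.sin (π*α/2) *
    (Real.Gamma (((d:ℝ)+α)/2) / Real.Gamma ((d:ℝ)/2))

noncomputable def Gd' (d : ℕ) (α : ℝ) : ℝ :=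
  (2/π * ((1 * (2:ℝ)^(α-2) + α * ((2:ℝ)^(α-2) * Real.log 2)) * Real.Gamma (α/2)
      + α * (2:ℝ)^(α-2) * (deriv Real.Gamma (α/2) * (1/2))) * Real.sin (π*α/2)
    + 2/π * (α * (2:ℝ)^(α-2) * Real.Gamma (α/2)) * (Real.cos (π*α/2) * (π/2)))
    * (Real.Gamma (((d:ℝ)+α)/2) / Real.Gamma ((d:ℝ)/2))
  + 2/π * (α * (2:ℝ)^(α-2) * Real.Gamma (α/2)) * Real.sin (π*α/2) *
      (deriv Real.Gamma (((d:ℝ)+α)/2) * (1/2) / Real.Gamma ((d:ℝ)/2))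

lemma hasDerivAt_Gd (d : ℕ) {α : ℝ} (h1 : 1 < α) (h2 : α < 2) :
    HasDerivAt (Gd d) (Gd' d α) α := by
  have hy : (0:ℝ) < α/2 := by linarith
  have hxpos : (0:ℝ) < ((d:ℝ)+α)/2 := by
    have : (0:ℝ) ≤ (d:ℝ) := Nat.cast_nonneg d
    linarith
  have h2p : HasDerivAt (fun a : ℝ => (2:ℝ)^(a-2)) ((2:ℝ)^(α-2) * Real.log 2) α := by
    have hout := (Real.hasStrictDerivAt_const_rpow (by norm_num : (0:ℝ) < 2) (α-2)).hasDerivAt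
    have hin : HasDerivAt (fun a : ℝ => a - 2) 1 α := (hasDerivAt_id α).sub_const 2
    simpa [Function.comp_def] using hout.comp α hin
  have hGy : HasDerivAt (fun a : ℝ => Real.Gamma (a/2)) (deriv Real.Gamma (α/2) * (1/2)) α := by
    have hin : HasDerivAt (fun a : ℝ => a/2) (1/2) α := by
      simpa using (hasDerivAt_id α).div_const 2
    simpa [Function.comp_def] using (dGamma hy).hasDerivAt.comp α hin
  have hsin : HasDerivAt (fun a : ℝ => Real.sin (π*a/2)) (Real.cos (π*α/2) * (π/2)) α := by
    have hin : HasDerivAt (fun a : ℝ => π*a/2) (π/2) α := by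
      simpa using ((hasDerivAt_id α).const_mul π).div_const 2
    simpa [Function.comp_def] using (Real.hasDerivAt_sin (π*α/2)).comp α hin
  have hGx : HasDerivAt (fun a : ℝ => Real.Gamma (((d:ℝ)+a)/2))
      (deriv Real.Gamma (((d:ℝ)+α)/2) * (1/2)) α := by
    have hin : HasDerivAt (fun a : ℝ => ((d:ℝ)+a)/2) (1/2) α := by
      simpa using ((hasDerivAt_id α).const_add (d:ℝ)).div_const 2
    simpa [Function.comp_def] using (dGamma hxpos).hasDerivAt.comp α hin
  have hB := ((hasDerivAt_id α).mul h2p).mul hGy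
  have hCB := hB.const_mul (2/π)
  have hCBS := hCB.mul hsin
  have hQ := hGx.div_const (Real.Gamma ((d:ℝ)/2))
  have hfinal := hCBS.mul hQ
  convert hfinal using 1
  all_goals rfl

end gd

section bound

lemma two_div_pi_le_one : 2/π ≤ 1 := by
  rw [div_le_one Real.pi_pos]
  linarith [Real.pi_gt_three]

set_option maxHeartbeats 1000000 in
lemma abs_Gd'_le (d : ℕ) (hd : 1 ≤ d) {α : ℝ} (h1 : 1 < α) (h2 : α < 2) :
    |Gd' d α| ≤ 200 * d := by
  have hd1 : (1:ℝ) ≤ (d:ℝ) := by exact_mod_cast hd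
  have hy1 : (1/2:ℝ) ≤ α/2 := by linarith
  have hy2 : α/2 ≤ 1 := by linarith
  have hy0 : (0:ℝ) < α/2 := by linarith
  have hx1 : (1:ℝ) ≤ ((d:ℝ)+α)/2 := by linarith
  have hx0 : (0:ℝ) < ((d:ℝ)+α)/2 := by linarith
  have hcpos : (0:ℝ) < (d:ℝ)/2 := by linarith
  have hGy0 : 0 < Real.Gamma (α/2) := Real.Gamma_pos_of_pos hy0
  have hGy2 : Real.Gamma (α/2) ≤ 2 := Gamma_le_two_of_mem hy1 (by linarith)
  have hDy : |deriv Real.Gamma (α/2)| ≤ 24 := abs_deriv_Gamma_le_half hy1 hy2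
  have hGx0 : 0 < Real.Gamma (((d:ℝ)+α)/2) := Real.Gamma_pos_of_pos hx0
  have hDx : |deriv Real.Gamma (((d:ℝ)+α)/2)| ≤
      Real.Gamma (((d:ℝ)+α)/2) * (Real.log (((d:ℝ)+α)/2) + 12) :=
    abs_deriv_Gamma_le_one hx1
  have hc0 : 0 < Real.Gamma ((d:ℝ)/2) := Real.Gamma_pos_of_pos hcpos
  have hQR : Real.Gamma (((d:ℝ)+α)/2) / Real.Gamma ((d:ℝ)/2) ≤ ((d:ℝ)/2) ^ (α/2) := by
    have hled := Gamma_interp (c := (d:ℝ)/2) (s := α/2) hcpos (by linarith) hy2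
    have hx_eq : (d:ℝ)/2 + α/2 = ((d:ℝ)+α)/2 := by ring
    rw [hx_eq] at hled
    rw [div_le_iff₀ hc0]
    nlinarith [hled, Real.rpow_pos_of_pos hcpos (α/2)]
  have hRd : ((d:ℝ)/2) ^ (α/2) ≤ (d:ℝ) := rpow_le_cast hd (by linarith) hy2
  have hQd : Real.Gamma (((d:ℝ)+α)/2) / Real.Gamma ((d:ℝ)/2) ≤ (d:ℝ) := hQR.trans hRd
  have hQ0 : 0 < Real.Gamma (((d:ℝ)+α)/2) / Real.Gamma ((d:ℝ)/2) := by positivity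
  have hS0 : 0 < Real.sin (π*α/2) := sin_pos_mid h1 h2
  have hS1 : Real.sin (π*α/2) ≤ 1 := Real.sin_le_one _
  have hcos : |Real.cos (π*α/2)| ≤ 1 := Real.abs_cos_le_one _
  have hP0 : (0:ℝ) < (2:ℝ)^(α-2) := Real.rpow_pos_of_pos two_pos _
  have hP1 : (2:ℝ)^(α-2) ≤ 1 := Real.rpow_le_one_of_one_le_of_nonpos one_le_two (by linarith)
  have hl2 : Real.log 2 ≤ 0.7 := by linarith [Real.log_two_lt_d9.le]
  have hl2' : 0 ≤ Real.log 2 := Real.log_nonneg one_le_two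
  have hlx : 0 ≤ Real.log (((d:ℝ)+α)/2) := Real.log_nonneg hx1
  have h2pi : 2/π ≤ 1 := two_div_pi_le_one
  have h2pi0 : 0 < 2/π := by positivity
  have hpi : π ≤ 3.15 := by linarith [Real.pi_lt_d2]
  have hstar := star_bound hd h1 h2
  have hαP : α * (2:ℝ)^(α-2) ≤ 2 := by nlinarith
  have hαP0 : 0 < α * (2:ℝ)^(α-2) := by positivity
  have hB0 : 0 < α * (2:ℝ)^(α-2) * Real.Gamma (α/2) := by positivity
  have hB4 : α * (2:ℝ)^(α-2) * Real.Gamma (α/2) ≤ 4 := by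
    nlinarith [mul_le_mul_of_nonneg_right hαP hGy0.le]
  have hBder : |(1 * (2:ℝ)^(α-2) + α * ((2:ℝ)^(α-2) * Real.log 2)) * Real.Gamma (α/2)
      + α * (2:ℝ)^(α-2) * (deriv Real.Gamma (α/2) * (1/2))| ≤ 29 := by
    refine (abs_add_le _ _).trans ?_
    have he1 : |(1 * (2:ℝ)^(α-2) + α * ((2:ℝ)^(α-2) * Real.log 2)) * Real.Gamma (α/2)| ≤ 5 := by
      rw [abs_mul, abs_of_nonneg hGy0.le]
      have h1' : |1 * (2:ℝ)^(α-2) + α * ((2:ℝ)^(α-2) * Real.log 2)| ≤ 2.5 := by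
        rw [abs_of_nonneg (by positivity)]
        nlinarith [mul_le_mul_of_nonneg_right hαP hl2']
      calc |1 * (2:ℝ)^(α-2) + α * ((2:ℝ)^(α-2) * Real.log 2)| * Real.Gamma (α/2)
          ≤ 2.5 * 2 := mul_le_mul h1' hGy2 hGy0.le (by norm_num)
        _ = 5 := by norm_num
    have he2 : |α * (2:ℝ)^(α-2) * (deriv Real.Gamma (α/2) * (1/2))| ≤ 24 := by
      rw [abs_mul, abs_of_nonneg hαP0.le, abs_mul,
        abs_of_nonneg (by norm_num : (0:ℝ) ≤ (1/2:ℝ))]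
      calc α * (2:ℝ)^(α-2) * (|deriv Real.Gamma (α/2)| * (1/2))
          ≤ 2 * 12 := by
            apply mul_le_mul hαP _ (by positivity) (by norm_num)
            linarith
        _ = 24 := by norm_num
    linarith
  have hT1 : |(2/π * ((1 * (2:ℝ)^(α-2) + α * ((2:ℝ)^(α-2) * Real.log 2)) * Real.Gamma (α/2)
      + α * (2:ℝ)^(α-2) * (deriv Real.Gamma (α/2) * (1/2))) * Real.sin (π*α/2)
    + 2/π * (α * (2:ℝ)^(α-2) * Real.Gamma (α/2)) * (Real.cos (π*α/2) * (π/2)))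
    * (Real.Gamma (((d:ℝ)+α)/2) / Real.Gamma ((d:ℝ)/2))| ≤ 36 * d := by
    rw [abs_mul, abs_of_nonneg hQ0.le]
    have hsum : |2/π * ((1 * (2:ℝ)^(α-2) + α * ((2:ℝ)^(α-2) * Real.log 2)) * Real.Gamma (α/2)
        + α * (2:ℝ)^(α-2) * (deriv Real.Gamma (α/2) * (1/2))) * Real.sin (π*α/2)
      + 2/π * (α * (2:ℝ)^(α-2) * Real.Gamma (α/2)) * (Real.cos (π*α/2) * (π/2))| ≤ 36 := by
      refine (abs_add_le _ _).trans ?_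
      have hu : |2/π * ((1 * (2:ℝ)^(α-2) + α * ((2:ℝ)^(α-2) * Real.log 2)) * Real.Gamma (α/2)
          + α * (2:ℝ)^(α-2) * (deriv Real.Gamma (α/2) * (1/2))) * Real.sin (π*α/2)| ≤ 29 := by
        rw [abs_mul, abs_mul, abs_of_nonneg h2pi0.le, abs_of_nonneg hS0.le]
        have ha : 2/π * |(1 * (2:ℝ)^(α-2) + α * ((2:ℝ)^(α-2) * Real.log 2)) * Real.Gamma (α/2)
            + α * (2:ℝ)^(α-2) * (deriv Real.Gamma (α/2) * (1/2))| ≤ 29 := by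
          calc 2/π * |(1 * (2:ℝ)^(α-2) + α * ((2:ℝ)^(α-2) * Real.log 2)) * Real.Gamma (α/2)
              + α * (2:ℝ)^(α-2) * (deriv Real.Gamma (α/2) * (1/2))| ≤ 1 * 29 :=
            mul_le_mul h2pi hBder (abs_nonneg _) (by norm_num)
          _ = 29 := by norm_num
        calc 2/π * |(1 * (2:ℝ)^(α-2) + α * ((2:ℝ)^(α-2) * Real.log 2)) * Real.Gamma (α/2)
            + α * (2:ℝ)^(α-2) * (deriv Real.Gamma (α/2) * (1/2))| * Real.sin (π*α/2)
            ≤ 29 * 1 := mul_le_mul ha hS1 hS0.le (by norm_num)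
          _ = 29 := by norm_num
      have hv : |2/π * (α * (2:ℝ)^(α-2) * Real.Gamma (α/2)) * (Real.cos (π*α/2) * (π/2))| ≤ 7 := by
        rw [abs_mul, abs_mul, abs_of_nonneg h2pi0.le, abs_of_nonneg hB0.le, abs_mul,
          abs_of_nonneg (by positivity : (0:ℝ) ≤ π/2)]
        have hA : 2/π * (α * (2:ℝ)^(α-2) * Real.Gamma (α/2)) ≤ 4 := by
          calc 2/π * (α * (2:ℝ)^(α-2) * Real.Gamma (α/2)) ≤ 1 * 4 :=
            mul_le_mul h2pi hB4 hB0.le (by norm_num)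
          _ = 4 := by norm_num
        have hcc : |Real.cos (π*α/2)| * (π/2) ≤ 1.6 := by
          calc |Real.cos (π*α/2)| * (π/2) ≤ 1 * 1.6 := by
                apply mul_le_mul hcos (by linarith) (by positivity) (by norm_num)
            _ = 1.6 := by norm_num
        calc 2/π * (α * (2:ℝ)^(α-2) * Real.Gamma (α/2)) * (|Real.cos (π*α/2)| * (π/2))
            ≤ 4 * 1.6 := mul_le_mul hA hcc (by positivity) (by norm_num)
          _ ≤ 7 := by norm_num
      linarith
    have hmm := mul_le_mul hsum hQd hQ0.le (by norm_num : (0:ℝ) ≤ 36)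
    linarith
  have hT2 : |2/π * (α * (2:ℝ)^(α-2) * Real.Gamma (α/2)) * Real.sin (π*α/2) *
      (deriv Real.Gamma (((d:ℝ)+α)/2) * (1/2) / Real.Gamma ((d:ℝ)/2))| ≤ 130 * d := by
    rw [abs_mul, abs_mul, abs_mul, abs_of_nonneg h2pi0.le, abs_of_nonneg hB0.le,
      abs_of_nonneg hS0.le, abs_div, abs_of_nonneg hc0.le, abs_mul,
      abs_of_nonneg (by norm_num : (0:ℝ) ≤ (1/2:ℝ))]
    have hkey : Real.sin (π*α/2) * (|deriv Real.Gamma (((d:ℝ)+α)/2)| / Real.Gamma ((d:ℝ)/2))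
        ≤ 63 * d := by
      have step1 : |deriv Real.Gamma (((d:ℝ)+α)/2)| / Real.Gamma ((d:ℝ)/2) ≤
          (Real.Gamma (((d:ℝ)+α)/2) / Real.Gamma ((d:ℝ)/2)) * (Real.log (((d:ℝ)+α)/2) + 12) := by
        rw [div_le_iff₀ hc0]
        calc |deriv Real.Gamma (((d:ℝ)+α)/2)| ≤
            Real.Gamma (((d:ℝ)+α)/2) * (Real.log (((d:ℝ)+α)/2) + 12) := hDx
          _ = Real.Gamma (((d:ℝ)+α)/2) / Real.Gamma ((d:ℝ)/2) * (Real.log (((d:ℝ)+α)/2) + 12)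
              * Real.Gamma ((d:ℝ)/2) := by field_simp
      have step2 : (Real.Gamma (((d:ℝ)+α)/2) / Real.Gamma ((d:ℝ)/2)) * (Real.log (((d:ℝ)+α)/2) + 12)
          ≤ ((d:ℝ)/2) ^ (α/2) * (Real.log (((d:ℝ)+α)/2) + 12) :=
        mul_le_mul_of_nonneg_right hQR (by linarith)
      calc Real.sin (π*α/2) * (|deriv Real.Gamma (((d:ℝ)+α)/2)| / Real.Gamma ((d:ℝ)/2))
          ≤ Real.sin (π*α/2) * (((d:ℝ)/2) ^ (α/2) * (Real.log (((d:ℝ)+α)/2) + 12)) :=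
            mul_le_mul_of_nonneg_left (step1.trans step2) hS0.le
        _ ≤ 63 * d := hstar
    have hrw : 2/π * (α * (2:ℝ)^(α-2) * Real.Gamma (α/2)) * Real.sin (π*α/2) *
        (|deriv Real.Gamma (((d:ℝ)+α)/2)| * (1/2) / Real.Gamma ((d:ℝ)/2)) =
        (2/π * (α * (2:ℝ)^(α-2) * Real.Gamma (α/2)) * (1/2)) *
        (Real.sin (π*α/2) * (|deriv Real.Gamma (((d:ℝ)+α)/2)| / Real.Gamma ((d:ℝ)/2))) := by
      ring
    rw [hrw]
    have hcoef : 2/π * (α * (2:ℝ)^(α-2) * Real.Gamma (α/2)) * (1/2) ≤ 2 := by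
      calc 2/π * (α * (2:ℝ)^(α-2) * Real.Gamma (α/2)) * (1/2) ≤ 1 * 4 * (1/2) := by
            apply mul_le_mul_of_nonneg_right _ (by norm_num : (0:ℝ) ≤ 1/2)
            exact mul_le_mul h2pi hB4 hB0.le (by norm_num)
        _ = 2 := by norm_num
    have hkey0 : 0 ≤ Real.sin (π*α/2) * (|deriv Real.Gamma (((d:ℝ)+α)/2)| / Real.Gamma ((d:ℝ)/2)) := by
      positivity
    have hmm2 := mul_le_mul hcoef hkey hkey0 (by norm_num : (0:ℝ) ≤ 2)
    linarith
  unfold Gd'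
  refine le_trans (abs_add_le _ _) ?_
  refine le_trans (add_le_add hT1 hT2) (by linarith)

end bound


section main

lemma sphere_stable_eq (d : ℕ) (hd : 1 ≤ d) {α : ℝ} (h1 : 1 < α) (h2 : α < 2) :
    sphereArea d * stableConst d α = Gd d α := by
  have hpp : (0:ℝ) < π ^ ((d:ℝ)/2) := Real.rpow_pos_of_pos Real.pi_pos _
  have hS : 0 < Real.sin (π * α/2) := sin_pos_mid h1 h2
  have hGy : 0 < Real.Gamma (α/2) := Real.Gamma_pos_of_pos (by linarith)
  have h1a : (2 - α)/2 = 1 - α/2 := by ring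
  have hrefl := Real.Gamma_mul_Gamma_one_sub (α/2)
  have hsin_eq : π * (α/2) = π * α / 2 := by ring
  rw [hsin_eq] at hrefl
  have hdr : (1:ℝ) ≤ (d:ℝ) := by exact_mod_cast hd
  have hG : 0 < Real.Gamma ((d:ℝ)/2) := Real.Gamma_pos_of_pos (by linarith)
  have hGm : Real.Gamma (1 - α/2) = π / Real.sin (π * α / 2) / Real.Gamma (α/2) := by
    rw [eq_div_iff hGy.ne', mul_comm]
    exact hrefl
  unfold sphereArea stableConst Gd
  rw [h1a, hGm]
  rw [div_div]
  field_simp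

theorem stmt5 :
    ∃ C > 0, ∀ (d : ℕ), 1 ≤ d → ∀ α ∈ Set.Ioo (1 : ℝ) 2, ∀ ϑ ∈ Set.Ioo (1 : ℝ) 2,
      sphereArea d * |stableConst d α - stableConst d ϑ| ≤ C * d * |α - ϑ| := by
  refine ⟨200, by norm_num, fun d hd α hα ϑ hϑ => ?_⟩
  have hmvt := Convex.norm_image_sub_le_of_norm_hasDerivWithin_le
    (f := Gd d) (f' := Gd' d) (s := Set.Ioo (1:ℝ) 2) (C := 200 * d)
    (fun z hz => (hasDerivAt_Gd d hz.1 hz.2).hasDerivWithinAt)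
    (fun z hz => by rw [Real.norm_eq_abs]; exact abs_Gd'_le d hd hz.1 hz.2)
    (convex_Ioo 1 2) hϑ hα
  rw [Real.norm_eq_abs, Real.norm_eq_abs] at hmvt
  have hsA : 0 ≤ sphereArea d := by
    unfold sphereArea
    have hcpos : (0:ℝ) < (d:ℝ)/2 := by
      have : (1:ℝ) ≤ (d:ℝ) := by exact_mod_cast hd
      linarith
    have := Real.Gamma_pos_of_pos hcpos
    positivity
  have heq : sphereArea d * |stableConst d α - stableConst d ϑ| = |Gd d α - Gd d ϑ| := by
    rw [← abs_of_nonneg hsA, ← abs_mul, mul_sub,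
      sphere_stable_eq d hd hα.1 hα.2, sphere_stable_eq d hd hϑ.1 hϑ.2]
  rw [heq]
  calc |Gd d α - Gd d ϑ| ≤ 200 * d * |α - ϑ| := hmvt
    _ = 200 * (d:ℝ) * |α - ϑ| := by ring

end main
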